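/- Let K be a field, R = K[x_0,...,x_r], let I_C be the ideal generated by the 2×2 minors f_{pq} = x_{p-1}x_q - x_p x_{q-1} (1 ≤ p < q ≤ r), and for 2 ≤ i < j < h ≤ r let g_{ijh} be the 3×3 Hankel minor as above. Then for every k with 0 ≤ k ≤ r, the product x_k · g_{ijh} lies in I_C². -/
import Mathlib


open MvPolynomial

/-- The variable `x_i` in `K[x_0, ..., x_r]`, or `0` if `i > r`. -/
noncomputable def xv {K : Type*} [Field K] {r : ℕ} (i : ℕ) : MvPolynomial (Fin (r + 1)) K :=
  if h : i ≤ r then X ⟨i, Nat.lt_succ_of_le h⟩ else 0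

/-- The `2×2` Hankel minor `f_{pq} = x_{p-1} x_q - x_p x_{q-1}`. -/
noncomputable def fmin {K : Type*} [Field K] {r : ℕ} (p q : ℕ) : MvPolynomial (Fin (r + 1)) K :=
  xv (p - 1) * xv q - xv p * xv (q - 1)

/-- The `3×3` Hankel minor `g_{ijh}`. -/
noncomputable def gmin {K : Type*} [Field K] {r : ℕ} (i j h : ℕ) :
    MvPolynomial (Fin (r + 1)) K :=
  Matrix.det !![xv (i - 2), xv (j - 2), xv (h - 2);
                xv (i - 1), xv (j - 1), xv (h - 1);
                xv i,       xv j,       xv h]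

/-- The ideal of the rational normal curve of degree `r`. -/
noncomputable def rncIdeal (K : Type*) [Field K] (r : ℕ) :
    Ideal (MvPolynomial (Fin (r + 1)) K) :=
  Ideal.span {f | ∃ p q : ℕ, 1 ≤ p ∧ p < q ∧ q ≤ r ∧ f = fmin p q}

/-- Any `fmin a b` with `1 ≤ a, b ≤ r` lies in the ideal. -/
lemma fmem {K : Type*} [Field K] {r : ℕ} {a b : ℕ} (ha : 1 ≤ a) (har : a ≤ r)
    (hb : 1 ≤ b) (hbr : b ≤ r) : fmin (K := K) (r := r) a b ∈ rncIdeal K r := by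
  rcases lt_trichotomy a b with hlt | heq | hgt
  · exact Ideal.subset_span ⟨a, b, ha, hlt, hbr, rfl⟩
  · subst heq
    have : fmin (K := K) (r := r) a a = 0 := by unfold fmin; ring
    rw [this]; exact (rncIdeal K r).zero_mem
  · have : fmin (K := K) (r := r) a b = -fmin b a := by unfold fmin; ring
    rw [this]
    exact neg_mem (Ideal.subset_span ⟨b, a, hb, hgt, har, rfl⟩)

/-- For every variable `x_k`, the product `x_k · g_{ijh}` lies in `I_C²`. -/
theorem stmt2 {K : Type*} [Field K] {r : ℕ} (i j h k : ℕ)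
    (h1 : 2 ≤ i) (h2 : i < j) (h3 : j < h) (h4 : h ≤ r) (hk : k ≤ r) :
    xv (K := K) (r := r) k * gmin i j h ∈ (rncIdeal K r) ^ 2 := by
  have ei : i - 1 - 1 = i - 2 := by omega
  have ej : j - 1 - 1 = j - 2 := by omega
  have eh : h - 1 - 1 = h - 2 := by omega
  rw [pow_two]
  rcases Nat.eq_zero_or_pos k with hk0 | hk1
  · subst hk0
    have key : xv (K := K) (r := r) 0 * gmin i j h =
        fmin 1 i * fmin (j - 1) (h - 1) - fmin 1 (i - 1) * fmin (j - 1) h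
          + fmin 1 (j - 1) * fmin (i - 1) h - fmin 1 j * fmin (i - 1) (h - 1) := by
      simp [gmin, fmin, Matrix.det_fin_three, ei, ej, eh]
      ring
    rw [key]
    exact sub_mem
      (add_mem
        (sub_mem
          (Ideal.mul_mem_mul (fmem (by omega) (by omega) (by omega) (by omega))
            (fmem (by omega) (by omega) (by omega) (by omega)))
          (Ideal.mul_mem_mul (fmem (by omega) (by omega) (by omega) (by omega))
            (fmem (by omega) (by omega) (by omega) (by omega))))
        (Ideal.mul_mem_mul (fmem (by omega) (by omega) (by omega) (by omega))
          (fmem (by omega) (by omega) (by omega) (by omega))))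
      (Ideal.mul_mem_mul (fmem (by omega) (by omega) (by omega) (by omega))
        (fmem (by omega) (by omega) (by omega) (by omega)))
  · have key : xv (K := K) (r := r) k * gmin i j h =
        fmin k i * fmin j (h - 1) - fmin k (i - 1) * fmin j h
          + fmin k (j - 1) * fmin i h - fmin k j * fmin i (h - 1) := by
      simp [gmin, fmin, Matrix.det_fin_three, ei, ej, eh]
      ring
    rw [key]
    exact sub_mem
      (add_mem
        (sub_mem
          (Ideal.mul_mem_mul (fmem (by omega) (by omega) (by omega) (by omega))
            (fmem (by omega) (by omega) (by omega) (by omega)))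
          (Ideal.mul_mem_mul (fmem (by omega) (by omega) (by omega) (by omega))
            (fmem (by omega) (by omega) (by omega) (by omega))))
        (Ideal.mul_mem_mul (fmem (by omega) (by omega) (by omega) (by omega))
          (fmem (by omega) (by omega) (by omega) (by omega))))
      (Ideal.mul_mem_mul (fmem (by omega) (by omega) (by omega) (by omega))
        (fmem (by omega) (by omega) (by omega) (by omega)))
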